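/- Let [M] be the set of 3×3 real matrices M with m₁₁ ∈ [4, 5], m₁₂ ∈ [−1, 2], m₁₃ = 0, m₂₁ ∈ [−1, 2], m₂₂ ∈ [2, 3], m₂₃ = 1, m₃₁ = 0, m₃₂ = 1, m₃₃ = 2, and let [q] be the set of q ∈ ℝ³ with q₁ ∈ [−2, −1], q₂ ∈ [−1, 1], q₃ ∈ [−2, −1]. Then for every z₁ ∈ [1/5, 1/2] and every z₃ ∈ [1/2, 1], there exist a symmetric matrix M ∈ [M] and a vector q ∈ [q] such that z = (z₁, 0, z₃) solves LCP(M, q). -/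

import Mathlib

/-- `z` solves the linear complementarity problem LCP(M, q). -/
def SolvesLCP {n : ℕ} (M : Matrix (Fin n) (Fin n) ℝ) (q z : Fin n → ℝ) : Prop :=
  (∀ i, 0 ≤ q i + M.mulVec z i) ∧ (∀ i, 0 ≤ z i) ∧ (∑ i, (q i + M.mulVec z i) * z i) = 0

/-- Membership of a 3×3 matrix in the interval matrix of Example 6.2.3. -/
def MemIntervalM (M : Matrix (Fin 3) (Fin 3) ℝ) : Prop :=
  M 0 0 ∈ Set.Icc (4 : ℝ) 5 ∧ M 0 1 ∈ Set.Icc (-1 : ℝ) 2 ∧ M 0 2 = 0 ∧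
  M 1 0 ∈ Set.Icc (-1 : ℝ) 2 ∧ M 1 1 ∈ Set.Icc (2 : ℝ) 3 ∧ M 1 2 = 1 ∧
  M 2 0 = 0 ∧ M 2 1 = 1 ∧ M 2 2 = 2

/-- Membership of a vector in the interval vector of Example 6.2.3. -/
def MemIntervalQ (q : Fin 3 → ℝ) : Prop :=
  q 0 ∈ Set.Icc (-2 : ℝ) (-1) ∧ q 1 ∈ Set.Icc (-1 : ℝ) 1 ∧ q 2 ∈ Set.Icc (-2 : ℝ) (-1)

theorem stmt15 (z₁ z₃ : ℝ) (hz₁ : z₁ ∈ Set.Icc (1/5 : ℝ) (1/2)) (hz₃ : z₃ ∈ Set.Icc (1/2 : ℝ) 1) :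
    ∃ (M : Matrix (Fin 3) (Fin 3) ℝ) (q : Fin 3 → ℝ),
      MemIntervalM M ∧ M.IsSymm ∧ MemIntervalQ q ∧
      SolvesLCP M q ![z₁, 0, z₃] := by
  obtain ⟨h1, h2⟩ := hz₁
  obtain ⟨h3, h4⟩ := hz₃
  have hz₁pos : 0 < z₁ := by linarith
  set a : ℝ := max 4 (1/z₁) with ha
  have ha4 : (4:ℝ) ≤ a := le_max_left _ _
  have hainv : 1/z₁ ≤ a := le_max_right _ _
  have ha5 : a ≤ 5 := by
    apply max_le (by norm_num)
    rw [div_le_iff₀ hz₁pos]; linarith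
  have haz1 : 1 ≤ a * z₁ := by
    have := mul_le_mul_of_nonneg_right hainv hz₁pos.le
    rwa [one_div, inv_mul_cancel₀ hz₁pos.ne'] at this
  have haz2 : a * z₁ ≤ 2 := by
    rcases max_cases 4 (1/z₁) with ⟨he, _⟩ | ⟨he, _⟩ <;> rw [ha, he]
    · linarith
    · rw [one_div, inv_mul_cancel₀ hz₁pos.ne']; norm_num
  refine ⟨![![a,0,0],![0,2,1],![0,1,2]], ![-(a*z₁), 0, -2*z₃], ?_, ?_, ?_, ?_, ?_, ?_⟩
  · refine ⟨⟨ha4, ha5⟩, ?_⟩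
    norm_num [Set.mem_Icc, Matrix.vecHead, Matrix.vecTail, Matrix.cons_val_two, Matrix.tail_cons]
  · ext i j
    fin_cases i <;> fin_cases j <;>
      simp [Matrix.transpose, Matrix.vecHead, Matrix.vecTail]
  · refine ⟨?_, ?_, ?_⟩ <;>
      simp [Set.mem_Icc, Matrix.vecHead, Matrix.vecTail] <;> constructor <;> linarith
  · intro i
    fin_cases i <;>
      simp [Matrix.mulVec, dotProduct, Fin.sum_univ_three, Matrix.vecHead,
        Matrix.vecTail] <;> linarith
  · intro i
    fin_cases i <;> simp [Matrix.vecHead, Matrix.vecTail] <;> linarith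
  · simp only [Fin.sum_univ_three, Matrix.mulVec, dotProduct, Matrix.cons_val_zero,
      Matrix.cons_val_one, Matrix.head_cons, Matrix.cons_val_two, Matrix.tail_cons]
    ring
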